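/- (Proposition 1) If a sample x with pseudo-label ŷ = sign(θ ⬝ v(x)) satisfies ŷ · v(x) ⬝ (E[v | class +1] - E[v | class -1]) < 0, then a gradient descent step on the entropy loss using x strictly decreases the difference of mean logits between the two classes, i.e., the sample is harmful. -/

import Mathlib

open RealInnerProductSpace

noncomputable def sigmoid (a : ℝ) : ℝ := 1 / (1 + Real.exp (-a))

noncomputable def sigEnt (a : ℝ) : ℝ :=
  -sigmoid a * Real.log (sigmoid a) - (1 - sigmoid a) * Real.log (1 - sigmoid a)

lemma one_add_exp_pos (a : ℝ) : 0 < 1 + Real.exp (-a) := by positivity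

lemma sigmoid_pos (a : ℝ) : 0 < sigmoid a := by
  unfold sigmoid; positivity

lemma sigmoid_lt_one (a : ℝ) : sigmoid a < 1 := by
  unfold sigmoid
  rw [div_lt_one (one_add_exp_pos a)]
  linarith [Real.exp_pos (-a)]

lemma hasDerivAt_sigmoid (a : ℝ) :
    HasDerivAt sigmoid (sigmoid a * (1 - sigmoid a)) a := by
  have h : HasDerivAt (fun a : ℝ => 1 + Real.exp (-a)) (-Real.exp (-a)) a := by
    have := (Real.hasDerivAt_exp (-a)).comp a ((hasDerivAt_id a).neg)
    simpa using (this.const_add 1)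
  have h2 := h.inv (ne_of_gt (one_add_exp_pos a))
  have hsig : sigmoid = fun a : ℝ => (1 + Real.exp (-a))⁻¹ := by
    funext x; simp [sigmoid]
  rw [hsig]
  refine h2.congr_deriv ?_
  have hp := one_add_exp_pos a
  rw [← hsig]
  simp only [sigmoid]; field_simp
  ring

lemma log_ratio (a : ℝ) : Real.log (1 - sigmoid a) - Real.log (sigmoid a) = -a := by
  have hp := one_add_exp_pos a
  have h1 : 1 - sigmoid a = Real.exp (-a) / (1 + Real.exp (-a)) := by
    rw [sigmoid]; field_simp; ring
  rw [h1, sigmoid, Real.log_div (ne_of_gt (Real.exp_pos _)) (ne_of_gt hp),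
    Real.log_div one_ne_zero (ne_of_gt hp), Real.log_exp, Real.log_one]
  ring

lemma hasDerivAt_sigEnt (a : ℝ) :
    HasDerivAt sigEnt (-a * (sigmoid a * (1 - sigmoid a))) a := by
  have hp := sigmoid_pos a
  have hq : (0:ℝ) < 1 - sigmoid a := by linarith [sigmoid_lt_one a]
  have hs := hasDerivAt_sigmoid a
  set p := sigmoid a with hpdef
  set p' := p * (1 - p) with hp'def
  have h1 : HasDerivAt (fun a => Real.log (sigmoid a)) (p' / p) a :=
    hs.log (ne_of_gt hp)
  have hsub : HasDerivAt (fun a => 1 - sigmoid a) (-p') a := by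
    simpa using hs.const_sub 1
  have h2 : HasDerivAt (fun a => Real.log (1 - sigmoid a)) (-p' / (1 - p)) a :=
    hsub.log (ne_of_gt hq)
  have h3 := ((hs.mul h1).neg).sub (hsub.mul h2)
  have hfun : sigEnt = fun a => -(sigmoid a * Real.log (sigmoid a)) -
      (1 - sigmoid a) * Real.log (1 - sigmoid a) := by
    funext x; simp [sigEnt]
  rw [hfun]
  refine h3.congr_deriv ?_
  have h4 : Real.log (1 - p) - Real.log p = -a := log_ratio a
  have e1 : p * (p' / p) = p' := by field_simp
  have e2 : (1 - p) * (-p' / (1 - p)) = -p' := by field_simp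
  rw [e1, e2]
  have : -(p' * Real.log p + p') - (-p' * Real.log (1 - p) + -p')
      = p' * (Real.log (1 - p) - Real.log p) := by ring
  rw [this, h4]
  ring

theorem harmful_sample {d : ℕ} (θ v μp μm : EuclideanSpace ℝ (Fin d))
    (η : ℝ) (hη : 0 < η)
    (ha : ⟪θ, v⟫ ≠ 0)
    (yhat : ℝ) (hy : yhat = if 0 < ⟪θ, v⟫ then 1 else -1)
    (hharm : yhat * ⟪v, μp - μm⟫ < 0)
    (Δθ : EuclideanSpace ℝ (Fin d))
    (hΔ : Δθ = -η • gradient (fun θ' : EuclideanSpace ℝ (Fin d) => sigEnt ⟪θ', v⟫) θ) :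
    ⟪θ + Δθ, μp⟫ - ⟪θ + Δθ, μm⟫ < ⟪θ, μp⟫ - ⟪θ, μm⟫ := by
  set a : ℝ := ⟪θ, v⟫ with haa
  set c : ℝ := -a * (sigmoid a * (1 - sigmoid a)) with hc
  have hinner : HasFDerivAt (fun θ' : EuclideanSpace ℝ (Fin d) => ⟪θ', v⟫)
      (innerSL ℝ v) θ := by
    have heq : (fun θ' : EuclideanSpace ℝ (Fin d) => ⟪θ', v⟫)
        = fun θ' => (innerSL ℝ v) θ' := by
      funext u; exact real_inner_comm v u
    rw [heq]
    exact (innerSL ℝ v).hasFDerivAt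
  have hcomp : HasFDerivAt (fun θ' : EuclideanSpace ℝ (Fin d) => sigEnt ⟪θ', v⟫)
      (c • innerSL ℝ v) θ := by have := (hasDerivAt_sigEnt a).comp_hasFDerivAt θ hinner; exact this
  have hgrad : HasGradientAt (fun θ' : EuclideanSpace ℝ (Fin d) => sigEnt ⟪θ', v⟫)
      (c • v) θ := by
    rw [hasGradientAt_iff_hasFDerivAt]
    refine hcomp.congr_fderiv ?_
    ext u
    simp only [InnerProductSpace.toDual_apply_apply, ContinuousLinearMap.smul_apply,
      innerSL_apply_apply, real_inner_smul_left]
    rw [real_inner_comm]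
    simp
  have hg : gradient (fun θ' : EuclideanSpace ℝ (Fin d) => sigEnt ⟪θ', v⟫) θ = c • v :=
    hgrad.gradient
  rw [hg] at hΔ
  have hkey : ⟪Δθ, μp⟫ - ⟪Δθ, μm⟫ = (-η * c) * ⟪v, μp - μm⟫ := by
    rw [hΔ, smul_smul, real_inner_smul_left, real_inner_smul_left, inner_sub_right]
    ring
  have haw : a * ⟪v, μp - μm⟫ < 0 := by
    by_cases h : 0 < a
    · rw [hy, if_pos h] at hharm
      nlinarith
    · have ha' : a < 0 := lt_of_le_of_ne (not_lt.mp h) ha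
      rw [hy, if_neg h] at hharm
      nlinarith
  have hpq : 0 < sigmoid a * (1 - sigmoid a) := by
    have := sigmoid_pos a; have := sigmoid_lt_one a; nlinarith
  have hneg : ⟪Δθ, μp⟫ - ⟪Δθ, μm⟫ < 0 := by
    rw [hkey, hc]
    nlinarith [mul_neg_of_pos_of_neg (mul_pos hη hpq) haw]
  rw [inner_add_left, inner_add_left]
  linarith
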